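/- arXiv:1310.5895 — 3 statements merged into one kernel-verified Lean document; each statement's English description precedes it below -/
import Mathlib

section
/- Let n ∈ ℕ and let s, f ∈ ℕ with s ≤ f ≤ n. Then there exists a constant α > 0 (depending on s, f, n) such that for all x ∈ ℂ^n with at most s non-zero entries and all y ∈ ℂ^n with at most f non-zero entries, it holds that α·‖x‖·‖y‖ ≤ ‖(x,0) ⊛ (y,0)‖ ≤ √s·‖x‖·‖y‖, where (x,0), (y,0) ∈ ℂ^{2n−1} denote the vectors padded by n−1 zeros, ⊛ is the circular convolution in ℂ^{2n−1}, and ‖·‖ is the Euclidean norm. -/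
open scoped BigOperators

/-- Circular convolution on `ℂ^m`: `(u ⊛ v)_k = ∑_l u_l v_{(k-l) mod m}`. -/
noncomputable def cconv {m : ℕ} (u v : Fin m → ℂ) : Fin m → ℂ :=
  fun k => ∑ l : Fin m, u l * v (k - l)

/-- Circular correlation on `ℂ^m`: `(u ⋆ v)_k = ∑_l u_l conj (v_{(k+l) mod m})`. -/
noncomputable def ccorr {m : ℕ} (u v : Fin m → ℂ) : Fin m → ℂ :=
  fun k => ∑ l : Fin m, u l * (starRingEnd ℂ) (v (k + l))

/-- Euclidean (ℓ²) norm of a vector. -/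
noncomputable def euclNorm {m : ℕ} {E : Type*} [SeminormedAddGroup E] (x : Fin m → E) : ℝ :=
  Real.sqrt (∑ i, ‖x i‖ ^ 2)

/-- Zero padding `ℂ^n → ℂ^m` (entries of `x` followed by zeros). -/
def pad (n m : ℕ) (x : Fin n → ℂ) : Fin m → ℂ :=
  fun k => if h : (k : ℕ) < n then x ⟨k, h⟩ else 0

/-- `x` has at most `s` nonzero entries. -/
def sparse {n : ℕ} (s : ℕ) (x : Fin n → ℂ) : Prop :=
  Set.ncard {i | x i ≠ 0} ≤ s

/-- The unitary DFT matrix `F_{kl} = m^{-1/2} exp(2πi kl/m)`. -/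
noncomputable def dft (m : ℕ) : Matrix (Fin m) (Fin m) ℂ :=
  fun k l => ((Real.sqrt m : ℝ) : ℂ)⁻¹ *
    Complex.exp (2 * (Real.pi : ℂ) * Complex.I * ((k : ℕ) : ℂ) * ((l : ℕ) : ℂ) / (m : ℂ))

/-- Cyclic shift: `(S x)_k = x_{(k-1) mod m}`. -/
def shiftOp {m : ℕ} (x : Fin m → ℂ) : Fin m → ℂ :=
  fun k => x ⟨((k : ℕ) + (m - 1)) % m, Nat.mod_lt _ (by have := k.isLt; omega)⟩

/-- Time reversal: `(Γ x)_k = x_{(-k) mod m}`. -/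
def rev {m : ℕ} (u : Fin m → ℂ) : Fin m → ℂ := fun k => u (-k)

/-- Symmetrization `𝒮 : ℂ^n → ℂ^{2n-1}`,
`𝒮(x) = (x_0, …, x_{n-1}, conj x_{n-1}, …, conj x_1)`. -/
noncomputable def symmetrize (n : ℕ) (x : Fin n → ℂ) : Fin (2 * n - 1) → ℂ :=
  fun k =>
    if h : (k : ℕ) < n then x ⟨k, h⟩
    else (starRingEnd ℂ) (x ⟨2 * n - 1 - (k : ℕ), by have := k.isLt; omega⟩)

/-- Zero-padded symmetrization `𝒮_z : ℂ^n → ℂ^{4n-3}`, `𝒮_z(x) = 𝒮((x, 0_{n-1}))`. -/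
noncomputable def symmetrizeZ (n : ℕ) (x : Fin n → ℂ) : Fin (4 * n - 3) → ℂ :=
  fun k => symmetrize (2 * n - 1) (pad n (2 * n - 1) x) ⟨(k : ℕ), by have := k.isLt; omega⟩

/-- `𝒮_z' : ℂ^n → ℂ^{4n-1}`,
`𝒮_z'(x) = (0_n, x_0, …, x_{n-1}, conj x_{n-1}, …, conj x_0, 0_{n-1})`. -/
noncomputable def symmetrizeZ' (n : ℕ) (x : Fin n → ℂ) : Fin (4 * n - 1) → ℂ :=
  fun k =>
    if _ : (k : ℕ) < n then 0
    else if h2 : (k : ℕ) < 2 * n then x ⟨(k : ℕ) - n, by omega⟩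
    else if h3 : (k : ℕ) < 3 * n then (starRingEnd ℂ) (x ⟨3 * n - 1 - (k : ℕ), by omega⟩)
    else 0

section AuxLemmas

lemma euclNorm_nonneg' {m : ℕ} (x : Fin m → ℂ) : 0 ≤ euclNorm x := Real.sqrt_nonneg _

lemma euclNorm_sq' {m : ℕ} (x : Fin m → ℂ) : euclNorm x ^ 2 = ∑ i, ‖x i‖ ^ 2 :=
  Real.sq_sqrt (Finset.sum_nonneg fun i _ => sq_nonneg _)

lemma euclNorm_eq_zero_iff' {m : ℕ} (x : Fin m → ℂ) : euclNorm x = 0 ↔ x = 0 := by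
  unfold euclNorm
  rw [Real.sqrt_eq_zero (Finset.sum_nonneg fun i _ => sq_nonneg _)]
  constructor
  · intro h; funext i
    have := (Finset.sum_eq_zero_iff_of_nonneg (fun i _ => sq_nonneg _)).1 h i (Finset.mem_univ i)
    simpa using this
  · intro h; simp [h]

lemma euclNorm_pos' {m : ℕ} (x : Fin m → ℂ) (hx : x ≠ 0) : 0 < euclNorm x :=
  lt_of_le_of_ne (euclNorm_nonneg' x) fun h => hx ((euclNorm_eq_zero_iff' x).1 h.symm)

lemma euclNorm_mul' {m : ℕ} (c : ℂ) (x : Fin m → ℂ) :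
    euclNorm (fun i => c * x i) = ‖c‖ * euclNorm x := by
  unfold euclNorm
  rw [show ∑ i, ‖c * x i‖ ^ 2 = ‖c‖ ^ 2 * ∑ i, ‖x i‖ ^ 2 by
    rw [Finset.mul_sum]; exact Finset.sum_congr rfl fun i _ => by rw [norm_mul]; ring]
  rw [Real.sqrt_mul (sq_nonneg _), Real.sqrt_sq (norm_nonneg _)]

lemma euclNorm_pad' {n m : ℕ} (h : n ≤ m) (x : Fin n → ℂ) :
    euclNorm (pad n m x) = euclNorm x := by
  unfold euclNorm pad
  congr 1
  have hF : ∀ k : Fin m, ‖if hk : (k : ℕ) < n then x ⟨k, hk⟩ else (0 : ℂ)‖ ^ 2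
      = (fun j => if hj : j < n then ‖x ⟨j, hj⟩‖ ^ 2 else 0) (k : ℕ) := by
    intro k; by_cases hk : (k : ℕ) < n <;> simp [hk]
  rw [Finset.sum_congr rfl fun k _ => hF k,
    Fin.sum_univ_eq_sum_range (fun j => if hj : j < n then ‖x ⟨j, hj⟩‖ ^ 2 else 0) m,
    ← Finset.sum_subset (Finset.range_subset_range.2 h)
      (fun i _ hi => by rw [dif_neg]; simpa using hi),
    ← Fin.sum_univ_eq_sum_range (fun j => if hj : j < n then ‖x ⟨j, hj⟩‖ ^ 2 else 0) n]
  exact Finset.sum_congr rfl fun i _ => by rw [dif_pos i.isLt]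

lemma sparse_pad' {n m s : ℕ} (h : n ≤ m) (x : Fin n → ℂ) (hx : sparse s x) :
    sparse s (pad n m x) := by
  unfold sparse at *
  refine le_trans (le_trans (Set.ncard_le_ncard ?_
    (Set.Finite.image _ (Set.toFinite _)))
    (Set.ncard_image_of_injective _ (Fin.castLE_injective h)).le) hx
  intro k hk
  simp only [Set.mem_setOf_eq, pad] at hk
  by_cases hkn : (k : ℕ) < n
  · rw [dif_pos hkn] at hk
    exact ⟨⟨k, hkn⟩, hk, by ext; simp⟩
  · rw [dif_neg hkn] at hk; exact absurd rfl hk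

lemma sparse_mul' {n s : ℕ} (c : ℂ) (x : Fin n → ℂ) (hx : sparse s x) :
    sparse s (fun i => c * x i) := by
  unfold sparse at *
  refine le_trans (Set.ncard_le_ncard ?_ (Set.toFinite _)) hx
  intro i hi
  simp only [Set.mem_setOf_eq] at *
  exact fun h => hi (by rw [h, mul_zero])

lemma pad_mul' {n m : ℕ} (c : ℂ) (x : Fin n → ℂ) :
    pad n m (fun i => c * x i) = fun k => c * pad n m x k := by
  funext k; unfold pad; split <;> simp

lemma cconv_mul_mul' {m : ℕ} (c d : ℂ) (u v : Fin m → ℂ) :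
    cconv (fun l => c * u l) (fun l => d * v l) = fun k => (c * d) * cconv u v k := by
  funext k
  simp only [cconv, Finset.mul_sum]
  exact Finset.sum_congr rfl fun l _ => by ring

end AuxLemmas
section Young

lemma l1_le_sqrt_sparse {m s : ℕ} (u : Fin m → ℂ) (hu : sparse s u) :
    ∑ l, ‖u l‖ ≤ Real.sqrt s * euclNorm u := by
  classical
  set T := Finset.univ.filter (fun l => u l ≠ 0) with hT
  have hTs : (T.card : ℝ) ≤ s := by
    have hc : {l | u l ≠ 0}.ncard = T.card := by
      rw [Set.ncard_eq_toFinset_card']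
      congr 1
      ext l; simp [hT]
    have h := hu
    unfold sparse at h
    rw [hc] at h
    exact_mod_cast h
  have h1 : ∑ l, ‖u l‖ = ∑ l ∈ T, ‖u l‖ := by
    rw [eq_comm]
    apply Finset.sum_subset (Finset.subset_univ T)
    intro l _ hl
    simp only [hT, Finset.mem_filter, Finset.mem_univ, true_and, not_not] at hl
    simp [hl]
  have h2 : (∑ l ∈ T, ‖u l‖) ^ 2 ≤ (T.card : ℝ) * ∑ l ∈ T, ‖u l‖ ^ 2 := by
    have := Finset.sum_mul_sq_le_sq_mul_sq T (fun _ => (1 : ℝ)) (fun l => ‖u l‖)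
    simpa using this
  have h3 : ∑ l ∈ T, ‖u l‖ ^ 2 ≤ euclNorm u ^ 2 := by
    rw [euclNorm_sq']
    exact Finset.sum_le_sum_of_subset_of_nonneg (Finset.subset_univ T)
      (fun i _ _ => sq_nonneg _)
  have h4 : (∑ l, ‖u l‖) ^ 2 ≤ (s : ℝ) * euclNorm u ^ 2 := by
    rw [h1]
    calc (∑ l ∈ T, ‖u l‖) ^ 2 ≤ (T.card : ℝ) * ∑ l ∈ T, ‖u l‖ ^ 2 := h2
      _ ≤ (s : ℝ) * euclNorm u ^ 2 := by
          apply mul_le_mul hTs h3 (Finset.sum_nonneg fun i _ => sq_nonneg _)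
            (Nat.cast_nonneg s)
  nlinarith [Finset.sum_nonneg (fun l (_ : l ∈ Finset.univ) => norm_nonneg (u l)),
    Real.sq_sqrt (Nat.cast_nonneg s : (0:ℝ) ≤ s), Real.sqrt_nonneg (s : ℝ),
    euclNorm_nonneg' u, mul_nonneg (Real.sqrt_nonneg (s:ℝ)) (euclNorm_nonneg' u)]

lemma cconv_euclNorm_le {m s : ℕ} (u v : Fin m → ℂ) (hu : sparse s u) :
    euclNorm (cconv u v) ≤ Real.sqrt s * euclNorm u * euclNorm v := by
  rcases Nat.eq_zero_or_pos m with hm | hm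
  · subst hm
    simp [euclNorm]
  haveI : NeZero m := ⟨hm.ne'⟩
  set A := ∑ l, ‖u l‖ with hA
  have hA0 : 0 ≤ A := Finset.sum_nonneg fun l _ => norm_nonneg _
  have key : euclNorm (cconv u v) ^ 2 ≤ (A * euclNorm v) ^ 2 := by
    rw [euclNorm_sq']
    have step1 : ∀ k : Fin m, ‖cconv u v k‖ ^ 2 ≤ (∑ l, ‖u l‖ * ‖v (k - l)‖) ^ 2 := by
      intro k
      apply pow_le_pow_left₀ (norm_nonneg _)
      calc ‖∑ l, u l * v (k - l)‖ ≤ ∑ l, ‖u l * v (k - l)‖ := norm_sum_le _ _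
        _ = ∑ l, ‖u l‖ * ‖v (k - l)‖ := by simp [norm_mul]
    have step2 : ∀ k : Fin m, (∑ l, ‖u l‖ * ‖v (k - l)‖) ^ 2
        ≤ A * ∑ l, ‖u l‖ * ‖v (k - l)‖ ^ 2 := by
      intro k
      have := Finset.sum_mul_sq_le_sq_mul_sq Finset.univ
        (fun l => Real.sqrt ‖u l‖) (fun l => Real.sqrt ‖u l‖ * ‖v (k - l)‖)
      have e1 : ∀ l : Fin m, Real.sqrt ‖u l‖ * (Real.sqrt ‖u l‖ * ‖v (k - l)‖)
          = ‖u l‖ * ‖v (k - l)‖ := by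
        intro l; rw [← mul_assoc, Real.mul_self_sqrt (norm_nonneg _)]
      have e2 : ∀ l : Fin m, Real.sqrt ‖u l‖ ^ 2 = ‖u l‖ :=
        fun l => Real.sq_sqrt (norm_nonneg _)
      have e3 : ∀ l : Fin m, (Real.sqrt ‖u l‖ * ‖v (k - l)‖) ^ 2
          = ‖u l‖ * ‖v (k - l)‖ ^ 2 := by
        intro l; rw [mul_pow, Real.sq_sqrt (norm_nonneg _)]
      calc (∑ l, ‖u l‖ * ‖v (k - l)‖) ^ 2
          = (∑ l, Real.sqrt ‖u l‖ * (Real.sqrt ‖u l‖ * ‖v (k - l)‖)) ^ 2 := by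
            rw [Finset.sum_congr rfl fun l _ => (e1 l).symm]
        _ ≤ (∑ l, Real.sqrt ‖u l‖ ^ 2) * ∑ l, (Real.sqrt ‖u l‖ * ‖v (k - l)‖) ^ 2 := this
        _ = A * ∑ l, ‖u l‖ * ‖v (k - l)‖ ^ 2 := by
            rw [Finset.sum_congr rfl fun l _ => e2 l, Finset.sum_congr rfl fun l _ => e3 l]
    have step3 : ∀ l : Fin m, ∑ k : Fin m, ‖v (k - l)‖ ^ 2 = euclNorm v ^ 2 := by
      intro l
      rw [euclNorm_sq']
      exact Fintype.sum_equiv (Equiv.subRight l) _ _ (fun k => rfl)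
    calc ∑ k, ‖cconv u v k‖ ^ 2
        ≤ ∑ k, (∑ l, ‖u l‖ * ‖v (k - l)‖) ^ 2 :=
          Finset.sum_le_sum fun k _ => step1 k
      _ ≤ ∑ k : Fin m, A * ∑ l, ‖u l‖ * ‖v (k - l)‖ ^ 2 :=
          Finset.sum_le_sum fun k _ => step2 k
      _ = A * ∑ l : Fin m, ‖u l‖ * ∑ k : Fin m, ‖v (k - l)‖ ^ 2 := by
          rw [← Finset.mul_sum, Finset.sum_comm]
          congr 1
          exact Finset.sum_congr rfl fun l _ => (Finset.mul_sum _ _ _).symm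
      _ = (A * euclNorm v) ^ 2 := by
          rw [Finset.sum_congr rfl fun l _ => by rw [step3 l]]
          rw [← Finset.sum_mul]
          ring
  have h5 : euclNorm (cconv u v) ≤ A * euclNorm v := by
    nlinarith [euclNorm_nonneg' (cconv u v), euclNorm_nonneg' v,
      mul_nonneg hA0 (euclNorm_nonneg' v)]
  calc euclNorm (cconv u v) ≤ A * euclNorm v := h5
    _ ≤ Real.sqrt s * euclNorm u * euclNorm v :=
        mul_le_mul_of_nonneg_right (l1_le_sqrt_sparse u hu) (euclNorm_nonneg' v)

end Young
section NeZero

lemma cconv_pad_ne_zero {n : ℕ} (x y : Fin n → ℂ) (hx : x ≠ 0) (hy : y ≠ 0) :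
    cconv (pad n (2 * n - 1) x) (pad n (2 * n - 1) y) ≠ 0 := by
  classical
  have hn : 0 < n := by
    rcases Nat.eq_zero_or_pos n with h | h
    · subst h; exact absurd (funext fun i => i.elim0) hx
    · exact h
  set m := 2 * n - 1 with hm
  have hnm : n ≤ m := by omega
  have hexx : ∃ i, x i ≠ 0 := by
    by_contra h; push_neg at h; exact hx (funext h)
  have hexy : ∃ i, y i ≠ 0 := by
    by_contra h; push_neg at h; exact hy (funext h)
  set Tx := Finset.univ.filter (fun i => x i ≠ 0) with hTx
  set Ty := Finset.univ.filter (fun i => y i ≠ 0) with hTy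
  have hTxne : Tx.Nonempty := by
    obtain ⟨i, hi⟩ := hexx
    exact ⟨i, by simp [hTx, hi]⟩
  have hTyne : Ty.Nonempty := by
    obtain ⟨i, hi⟩ := hexy
    exact ⟨i, by simp [hTy, hi]⟩
  set i0 := Tx.max' hTxne with hi0
  set j0 := Ty.max' hTyne with hj0
  have hxi0 : x i0 ≠ 0 := by
    have := Tx.max'_mem hTxne
    simp only [hTx, Finset.mem_filter] at this
    exact this.2
  have hyj0 : y j0 ≠ 0 := by
    have := Ty.max'_mem hTyne
    simp only [hTy, Finset.mem_filter] at this
    exact this.2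
  have hmaxx : ∀ i : Fin n, (i0 : ℕ) < (i : ℕ) → x i = 0 := by
    intro i hi
    by_contra h
    exact absurd (Finset.le_max' Tx i (by simp [hTx, h])) (by exact not_le.2 hi)
  have hmaxy : ∀ i : Fin n, (j0 : ℕ) < (i : ℕ) → y i = 0 := by
    intro i hi
    by_contra h
    exact absurd (Finset.le_max' Ty i (by simp [hTy, h])) (by exact not_le.2 hi)
  have hk : (i0 : ℕ) + (j0 : ℕ) < m := by
    have := i0.isLt; have := j0.isLt; omega
  intro hzero
  set K : Fin m := ⟨(i0 : ℕ) + (j0 : ℕ), hk⟩ with hK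
  have hKz : cconv (pad n m x) (pad n m y) K = 0 := by rw [hzero]; rfl
  have hL0 : (i0 : ℕ) < m := by omega
  have hsum : cconv (pad n m x) (pad n m y) K = x i0 * y j0 := by
    rw [cconv]
    rw [Finset.sum_eq_single (⟨(i0 : ℕ), hL0⟩ : Fin m)]
    · have h1 : pad n m x ⟨(i0 : ℕ), hL0⟩ = x i0 := by
        simp [pad, i0.isLt]
      have h2 : K - (⟨(i0 : ℕ), hL0⟩ : Fin m) = ⟨(j0 : ℕ), by omega⟩ := by
        rw [Fin.sub_def]
        apply Fin.ext
        show (m - (i0 : ℕ) + ((i0 : ℕ) + (j0 : ℕ))) % m = (j0 : ℕ)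
        rw [show m - (i0 : ℕ) + ((i0 : ℕ) + (j0 : ℕ)) = (j0 : ℕ) + m by omega,
          Nat.add_mod_right, Nat.mod_eq_of_lt (by omega)]
      rw [h1, h2]
      have h3 : pad n m y ⟨(j0 : ℕ), by omega⟩ = y j0 := by
        simp [pad, j0.isLt]
      rw [h3]
    · intro l _ hl
      by_cases hln : (l : ℕ) < n
      · by_cases hcmp : (i0 : ℕ) < (l : ℕ)
        · have hx0 : x ⟨(l : ℕ), hln⟩ = 0 := hmaxx _ hcmp
          have : pad n m x l = 0 := by simp [pad, hln, hx0]
          rw [this, zero_mul]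
        · have hne : (l : ℕ) ≠ (i0 : ℕ) := fun h => hl (Fin.ext h)
          have hlt : (l : ℕ) < (i0 : ℕ) := by omega
          have hv : ((K - l : Fin m) : ℕ) = (i0 : ℕ) + (j0 : ℕ) - (l : ℕ) := by
            rw [Fin.sub_def]
            show (m - (l : ℕ) + ((i0 : ℕ) + (j0 : ℕ))) % m = _
            rw [show m - (l : ℕ) + ((i0 : ℕ) + (j0 : ℕ))
                = ((i0 : ℕ) + (j0 : ℕ) - (l : ℕ)) + m by omega,
              Nat.add_mod_right, Nat.mod_eq_of_lt (by omega)]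
          have hvz : pad n m y (K - l) = 0 := by
            unfold pad
            split
            case isTrue h =>
              apply hmaxy
              rw [hv]; omega
            case isFalse h => rfl
          rw [hvz, mul_zero]
      · have : pad n m x l = 0 := by simp [pad, hln]
        rw [this, zero_mul]
    · intro h; exact absurd (Finset.mem_univ _) h
  rw [hsum] at hKz
  exact mul_ne_zero hxi0 hyj0 hKz

end NeZero
section Topology

lemma isClosed_sparse_set (n s : ℕ) : IsClosed {x : Fin n → ℂ | sparse s x} := by
  classical
  have heq : {x : Fin n → ℂ | sparse s x} =
      ⋃ T ∈ {T : Finset (Fin n) | T.card ≤ s}, {x | ∀ i, i ∉ T → x i = 0} := by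
    ext x
    simp only [Set.mem_setOf_eq, Set.mem_iUnion, exists_prop]
    constructor
    · intro h
      refine ⟨{i | x i ≠ 0}.toFinset, ?_, ?_⟩
      · rw [← Set.ncard_eq_toFinset_card']; exact h
      · intro i hi
        by_contra hxi
        exact hi (Set.mem_toFinset.2 hxi)
    · rintro ⟨T, hT, hsub⟩
      unfold sparse
      refine le_trans (le_trans (Set.ncard_le_ncard ?_ T.finite_toSet)
        (Set.ncard_coe_finset T).le) hT
      intro i hi
      by_contra h
      exact hi (hsub i h)
  rw [heq]
  apply Set.Finite.isClosed_biUnion (Set.toFinite _)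
  intro T _
  have h2 : {x : Fin n → ℂ | ∀ i, i ∉ T → x i = 0}
      = ⋂ i, {x : Fin n → ℂ | i ∉ T → x i = 0} := by
    ext x; simp
  rw [h2]
  apply isClosed_iInter
  intro i
  by_cases h : i ∈ T
  · have : {x : Fin n → ℂ | i ∉ T → x i = 0} = Set.univ := by
      ext x; simp [h]
    rw [this]; exact isClosed_univ
  · have : {x : Fin n → ℂ | i ∉ T → x i = 0} = {x | x i = 0} := by
      ext x; simp [h]
    rw [this]
    exact isClosed_eq (continuous_apply i) continuous_const

lemma continuous_euclNorm {m : ℕ} : Continuous fun x : Fin m → ℂ => euclNorm x := by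
  unfold euclNorm
  exact Real.continuous_sqrt.comp (continuous_finset_sum _ fun i _ =>
    (continuous_apply i).norm.pow 2)

lemma continuous_pad (n m : ℕ) : Continuous fun x : Fin n → ℂ => pad n m x := by
  apply continuous_pi
  intro k
  unfold pad
  by_cases h : (k : ℕ) < n
  · simp only [dif_pos h]; exact continuous_apply _
  · simp only [dif_neg h]; exact continuous_const

end Topology

/-- RNMP for circular convolutions of zero-padded sparse vectors. -/
theorem rnmp_circular_convolution (n s f : ℕ) (hsf : s ≤ f) (hfn : f ≤ n) :
    ∃ α : ℝ, 0 < α ∧ ∀ x y : Fin n → ℂ, sparse s x → sparse f y →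
      α * euclNorm x * euclNorm y ≤
          euclNorm (cconv (pad n (2 * n - 1) x) (pad n (2 * n - 1) y)) ∧
      euclNorm (cconv (pad n (2 * n - 1) x) (pad n (2 * n - 1) y)) ≤
          Real.sqrt s * euclNorm x * euclNorm y := by
  classical
  rcases Nat.eq_zero_or_pos n with hn | hn
  · subst hn
    refine ⟨1, one_pos, fun x y _ _ => ?_⟩
    have hx0 : euclNorm x = 0 := by simp [euclNorm]
    have hy0 : euclNorm y = 0 := by simp [euclNorm]
    constructor
    · rw [hx0, hy0]
      simpa using euclNorm_nonneg' _
    · rw [hx0, hy0]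
      have hc : euclNorm (cconv (pad 0 (2 * 0 - 1) x) (pad 0 (2 * 0 - 1) y)) = 0 := by
        simp [euclNorm]
      rw [hc]; simp
  rcases Nat.eq_zero_or_pos s with hs | hs
  · subst hs
    refine ⟨1, one_pos, fun x y hx _ => ?_⟩
    have h0 : {i : Fin n | x i ≠ 0} = ∅ :=
      (Set.ncard_eq_zero (Set.toFinite _)).1 (Nat.le_zero.1 hx)
    have hx0 : x = 0 := by
      funext i
      by_contra h
      have : i ∈ ({i : Fin n | x i ≠ 0} : Set (Fin n)) := h
      rw [h0] at this
      exact this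
    have hxn : euclNorm x = 0 := (euclNorm_eq_zero_iff' x).2 hx0
    have hpad0 : pad n (2 * n - 1) x = 0 := by
      funext k
      rw [hx0]
      unfold pad
      split <;> rfl
    have hconv0 : cconv (pad n (2 * n - 1) x) (pad n (2 * n - 1) y) = 0 := by
      funext k
      rw [hpad0]
      simp [cconv]
    constructor
    · rw [hxn]
      simpa using euclNorm_nonneg' _
    · rw [hconv0, (euclNorm_eq_zero_iff' _).2 rfl, hxn]
      simp
  -- main case : 0 < n, 0 < s
  set m := 2 * n - 1 with hm
  have hnm : n ≤ m := by omega
  set g : (Fin n → ℂ) × (Fin n → ℂ) → ℝ :=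
    fun p => euclNorm (cconv (pad n m p.1) (pad n m p.2)) with hg
  have hgcont : Continuous g := by
    apply continuous_euclNorm.comp
    apply continuous_pi
    intro k
    unfold cconv
    apply continuous_finset_sum
    intro l _
    exact ((continuous_apply l).comp ((continuous_pad n m).comp continuous_fst)).mul
      ((continuous_apply (k - l)).comp ((continuous_pad n m).comp continuous_snd))
  set K : Set ((Fin n → ℂ) × (Fin n → ℂ)) :=
    {p | sparse s p.1 ∧ sparse f p.2 ∧ euclNorm p.1 = 1 ∧ euclNorm p.2 = 1} with hKdef
  have hKclosed : IsClosed K := by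
    have h1 : IsClosed {p : (Fin n → ℂ) × (Fin n → ℂ) | sparse s p.1} :=
      (isClosed_sparse_set n s).preimage continuous_fst
    have h2 : IsClosed {p : (Fin n → ℂ) × (Fin n → ℂ) | sparse f p.2} :=
      (isClosed_sparse_set n f).preimage continuous_snd
    have h3 : IsClosed {p : (Fin n → ℂ) × (Fin n → ℂ) | euclNorm p.1 = 1} :=
      isClosed_eq (continuous_euclNorm.comp continuous_fst) continuous_const
    have h4 : IsClosed {p : (Fin n → ℂ) × (Fin n → ℂ) | euclNorm p.2 = 1} :=
      isClosed_eq (continuous_euclNorm.comp continuous_snd) continuous_const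
    have hKeq : K = ({p : (Fin n → ℂ) × (Fin n → ℂ) | sparse s p.1}
        ∩ {p | sparse f p.2} ∩ {p | euclNorm p.1 = 1} ∩ {p | euclNorm p.2 = 1}) := by
      ext p
      simp only [hKdef, Set.mem_setOf_eq, Set.mem_inter_iff]
      tauto
    rw [hKeq]
    exact ((h1.inter h2).inter h3).inter h4
  have hKbdd : Bornology.IsBounded K := by
    rw [isBounded_iff_forall_norm_le]
    refine ⟨1, fun p hp => ?_⟩
    obtain ⟨_, _, hp1, hp2⟩ := hp
    have key : ∀ z : Fin n → ℂ, euclNorm z = 1 → ‖z‖ ≤ 1 := by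
      intro z hz
      rw [pi_norm_le_iff_of_nonneg zero_le_one]
      intro i
      have h1 : ‖z i‖ ^ 2 ≤ ∑ j, ‖z j‖ ^ 2 :=
        Finset.single_le_sum (f := fun j => ‖z j‖ ^ 2) (fun j _ => sq_nonneg _) (Finset.mem_univ i)
      have h2 : ∑ j, ‖z j‖ ^ 2 = 1 := by
        have h3 := euclNorm_sq' z
        rw [hz] at h3
        simpa using h3.symm
      nlinarith [norm_nonneg (z i)]
    rw [Prod.norm_def]
    exact max_le (key _ hp1) (key _ hp2)
  have hKcompact : IsCompact K := Metric.isCompact_of_isClosed_isBounded hKclosed hKbdd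
  have hKne : K.Nonempty := by
    set e : Fin n → ℂ := fun i => if i = ⟨0, hn⟩ then 1 else 0 with he
    have hesp : ∀ t : ℕ, 1 ≤ t → sparse t e := by
      intro t ht
      unfold sparse
      have hsub : {i | e i ≠ 0} ⊆ {(⟨0, hn⟩ : Fin n)} := by
        intro i hi
        simp only [he, Set.mem_setOf_eq] at hi
        by_contra h
        simp only [Set.mem_singleton_iff] at h
        exact hi (if_neg h)
      refine le_trans (le_trans (Set.ncard_le_ncard hsub (Set.finite_singleton _)) ?_) ht
      simp
    have henorm : euclNorm e = 1 := by
      unfold euclNorm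
      have hsum : ∑ i, ‖e i‖ ^ 2 = 1 := by
        have : ∀ i : Fin n, ‖e i‖ ^ 2 = if i = ⟨0, hn⟩ then 1 else 0 := by
          intro i
          by_cases h : i = ⟨0, hn⟩ <;> simp [he, h]
        rw [Finset.sum_congr rfl fun i _ => this i]
        simp
      rw [hsum, Real.sqrt_one]
    exact ⟨(e, e), hesp s hs, hesp f (le_trans hs hsf), henorm, henorm⟩
  obtain ⟨p, hpK, hpmin⟩ := hKcompact.exists_isMinOn hKne hgcont.continuousOn
  obtain ⟨hps, hpf, hp1, hp2⟩ := hpK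
  have hp1ne : p.1 ≠ 0 := by
    intro h
    rw [h, (euclNorm_eq_zero_iff' _).2 rfl] at hp1
    exact zero_ne_one hp1
  have hp2ne : p.2 ≠ 0 := by
    intro h
    rw [h, (euclNorm_eq_zero_iff' _).2 rfl] at hp2
    exact zero_ne_one hp2
  refine ⟨g p, euclNorm_pos' _ (cconv_pad_ne_zero _ _ hp1ne hp2ne), fun x y hx hy => ?_⟩
  constructor
  · by_cases hx0 : x = 0
    · rw [hx0, (euclNorm_eq_zero_iff' _).2 rfl]
      simpa using euclNorm_nonneg' _
    by_cases hy0 : y = 0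
    · rw [hy0, (euclNorm_eq_zero_iff' _).2 rfl, mul_zero]
      exact euclNorm_nonneg' _
    have ha : 0 < euclNorm x := euclNorm_pos' x hx0
    have hb : 0 < euclNorm y := euclNorm_pos' y hy0
    set a := euclNorm x with hadef
    set b := euclNorm y with hbdef
    set c : ℂ := ((a⁻¹ : ℝ) : ℂ) with hc
    set d : ℂ := ((b⁻¹ : ℝ) : ℂ) with hd
    have hx'norm : euclNorm (fun i => c * x i) = 1 := by
      rw [euclNorm_mul']
      simp only [hc, Complex.norm_real, Real.norm_eq_abs, abs_of_nonneg (inv_nonneg.2 ha.le)]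
      rw [← hadef, inv_mul_cancel₀ ha.ne']
    have hy'norm : euclNorm (fun i => d * y i) = 1 := by
      rw [euclNorm_mul']
      simp only [hd, Complex.norm_real, Real.norm_eq_abs, abs_of_nonneg (inv_nonneg.2 hb.le)]
      rw [← hbdef, inv_mul_cancel₀ hb.ne']
    have hmem : ((fun i => c * x i, fun i => d * y i) :
        (Fin n → ℂ) × (Fin n → ℂ)) ∈ K :=
      ⟨sparse_mul' c x hx, sparse_mul' d y hy, hx'norm, hy'norm⟩
    have hle : g p ≤ g (fun i => c * x i, fun i => d * y i) := hpmin hmem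
    have heq : g (fun i => c * x i, fun i => d * y i)
        = a⁻¹ * b⁻¹ * euclNorm (cconv (pad n m x) (pad n m y)) := by
      show euclNorm (cconv (pad n m fun i => c * x i) (pad n m fun i => d * y i)) = _
      rw [pad_mul' c x, pad_mul' d y, cconv_mul_mul', euclNorm_mul']
      congr 1
      rw [norm_mul]
      simp only [hc, hd, Complex.norm_real, Real.norm_eq_abs,
        abs_of_nonneg (inv_nonneg.2 ha.le), abs_of_nonneg (inv_nonneg.2 hb.le)]
    rw [heq] at hle
    set N := euclNorm (cconv (pad n m x) (pad n m y)) with hN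
    calc g p * a * b ≤ (a⁻¹ * b⁻¹ * N) * a * b :=
          mul_le_mul_of_nonneg_right (mul_le_mul_of_nonneg_right hle ha.le) hb.le
      _ = N := by field_simp
  · have h := cconv_euclNorm_le (pad n m x) (pad n m y) (sparse_pad' hnm x hx)
    rwa [euclNorm_pad' hnm x, euclNorm_pad' hnm y] at h
end

section
/- Let n ∈ ℕ, n ≥ 1, set ñ = 4n−3, and let 𝒮_z : ℂ^n → ℂ^{ñ} be the zero-padded symmetrization 𝒮_z(x) = 𝒮((x, 0_{n−1})), where 𝒮 : ℂ^{2n−1} → ℂ^{4n−3} is the symmetrization map. Then for every x ∈ ℂ^n with x_0 ∈ ℝ, F(𝒮_z(x) ⊛ 𝒮_z(x)) = √ñ · |F 𝒮_z(x)|², where F is the ñ×ñ unitary DFT matrix and |z|² denotes the vector of componentwise squared moduli. -/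
open scoped BigOperators

noncomputable def eker (m : ℕ) (k : Fin m) (j : ℕ) : ℂ :=
  Complex.exp (2 * (Real.pi : ℂ) * Complex.I * ((k : ℕ) : ℂ) * (j : ℂ) / (m : ℂ))

lemma eker_add (m : ℕ) (k : Fin m) (a b : ℕ) :
    eker m k (a + b) = eker m k a * eker m k b := by
  unfold eker
  rw [← Complex.exp_add]
  congr 1
  push_cast
  ring

lemma eker_mul_left (m : ℕ) (hm : 0 < m) (k : Fin m) (q : ℕ) :
    eker m k (m * q) = 1 := by
  unfold eker
  have hm' : (m : ℂ) ≠ 0 := by exact_mod_cast hm.ne'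
  have h : (2 * (Real.pi : ℂ) * Complex.I * ((k : ℕ) : ℂ) * (((m * q : ℕ)) : ℂ) / (m : ℂ))
      = (((k : ℕ) * q : ℤ) : ℂ) * (2 * (Real.pi : ℂ) * Complex.I) := by
    push_cast
    field_simp
  rw [h, Complex.exp_int_mul_two_pi_mul_I]

lemma eker_mod (m : ℕ) (hm : 0 < m) (k : Fin m) (j : ℕ) :
    eker m k (j % m) = eker m k j := by
  conv_rhs => rw [← Nat.mod_add_div j m]
  rw [eker_add, eker_mul_left m hm, mul_one]

lemma eker_conj (m : ℕ) (hm : 0 < m) (k : Fin m) (j : ℕ) (hj : j ≤ m) :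
    (starRingEnd ℂ) (eker m k (m - j)) = eker m k j := by
  unfold eker
  rw [← Complex.exp_conj]
  have hm' : (m : ℂ) ≠ 0 := by exact_mod_cast hm.ne'
  have h : (starRingEnd ℂ) (2 * (Real.pi : ℂ) * Complex.I * ((k : ℕ) : ℂ) * (((m - j : ℕ)) : ℂ) / (m : ℂ))
      = 2 * (Real.pi : ℂ) * Complex.I * ((k : ℕ) : ℂ) * (j : ℂ) / (m : ℂ)
        + ((-(k : ℕ) : ℤ) : ℂ) * (2 * (Real.pi : ℂ) * Complex.I) := by
    rw [Nat.cast_sub hj]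
    simp only [map_div₀, map_mul, map_sub, Complex.conj_I, map_natCast, map_ofNat,
      Complex.conj_ofReal]
    push_cast
    field_simp
    ring
  rw [h, Complex.exp_add, Complex.exp_int_mul_two_pi_mul_I, mul_one]

lemma dft_apply (m : ℕ) (k l : Fin m) :
    dft m k l = ((Real.sqrt m : ℝ) : ℂ)⁻¹ * eker m k l := rfl

lemma sqrt_ne (m : ℕ) (hm : 0 < m) : ((Real.sqrt m : ℝ) : ℂ) ≠ 0 := by
  have : (0:ℝ) < Real.sqrt m := Real.sqrt_pos.mpr (by exact_mod_cast hm)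
  exact_mod_cast this.ne'

lemma dft_cconv (m : ℕ) (hm : 0 < m) (u v : Fin m → ℂ) (k : Fin m) :
    (dft m).mulVec (cconv u v) k =
      ((Real.sqrt m : ℝ) : ℂ) * ((dft m).mulVec u k) * ((dft m).mulVec v k) := by
  have hs := sqrt_ne m hm
  simp only [Matrix.mulVec, dotProduct, dft_apply, cconv]
  set c : ℂ := ((Real.sqrt m : ℝ) : ℂ)⁻¹ with hc
  have key : ∀ l : Fin m, (∑ j : Fin m, c * eker m k j * (u l * v (j - l)))
      = ∑ t : Fin m, c * (eker m k l * eker m k t) * (u l * v t) := by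
    intro l
    haveI : NeZero m := ⟨hm.ne'⟩
    refine (Fintype.sum_equiv (Equiv.addLeft l) _ _ fun t => ?_).symm
    have h1 : ((l + t : Fin m) : ℕ) = ((l : ℕ) + (t : ℕ)) % m := Fin.val_add l t
    have h2 : (Equiv.addLeft l) t - l = t := by
      simp [Equiv.addLeft]
    simp only [Equiv.coe_addLeft, h2, h1, eker_mod m hm, eker_add]
    rw [add_sub_cancel_left]
  calc (∑ j : Fin m, c * eker m k j * (∑ l : Fin m, u l * v (j - l)))
      = ∑ j : Fin m, ∑ l : Fin m, c * eker m k j * (u l * v (j - l)) := by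
        simp_rw [Finset.mul_sum]
    _ = ∑ l : Fin m, ∑ j : Fin m, c * eker m k j * (u l * v (j - l)) := Finset.sum_comm
    _ = ∑ l : Fin m, ∑ t : Fin m, c * (eker m k l * eker m k t) * (u l * v t) := by
        simp_rw [key]
    _ = ((Real.sqrt m : ℝ) : ℂ) * (∑ l : Fin m, c * eker m k l * u l)
          * (∑ t : Fin m, c * eker m k t * v t) := by
        conv_rhs => rw [mul_assoc, Finset.sum_mul_sum]
        rw [Finset.mul_sum]
        refine Finset.sum_congr rfl fun l _ => ?_
        rw [Finset.mul_sum]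
        refine Finset.sum_congr rfl fun t _ => ?_
        rw [hc]
        field_simp

lemma dft_real (m : ℕ) (hm : 0 < m) (u : Fin m → ℂ)
    (hu : ∀ j, u (-j) = (starRingEnd ℂ) (u j)) (k : Fin m) :
    (starRingEnd ℂ) ((dft m).mulVec u k) = (dft m).mulVec u k := by
  simp only [Matrix.mulVec, dotProduct, dft_apply]
  set c : ℂ := ((Real.sqrt m : ℝ) : ℂ)⁻¹ with hc
  rw [map_sum]
  haveI : NeZero m := ⟨hm.ne'⟩
  refine (Fintype.sum_equiv (Equiv.neg (Fin m)) _ _ fun j => ?_)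
  simp only [Equiv.neg_apply]
  have hcc : (starRingEnd ℂ) c = c := by
    simp [hc]
  have hval : ((-j : Fin m) : ℕ) = (m - (j : ℕ)) % m := Fin.coe_neg j
  have he : eker m k ((-j : Fin m) : ℕ) = (starRingEnd ℂ) (eker m k j) := by
    rw [hval, eker_mod m hm, ← eker_conj m hm k j (le_of_lt j.isLt), Complex.conj_conj]
  rw [map_mul, map_mul, hcc, hu j, he]

lemma symmetrizeZ_apply (n : ℕ) (hn : 0 < n) (x : Fin n → ℂ) (k : Fin (4 * n - 3)) :
    symmetrizeZ n x k =
      if h : (k : ℕ) < n then x ⟨k, h⟩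
      else if h2 : 3 * n - 2 ≤ (k : ℕ) then
        (starRingEnd ℂ) (x ⟨4 * n - 3 - (k : ℕ), by have := k.isLt; omega⟩)
      else 0 := by
  have hk := k.isLt
  unfold symmetrizeZ symmetrize pad
  simp only [Fin.val_mk]
  split_ifs with h1 h2 h3 h4 h5 h6 h7 <;>
    first
      | rfl
      | omega
      | simp
      | (exact congrArg x (Fin.ext (by simp only [Fin.val_mk]; omega)))
      | (exact congrArg _ (congrArg x (Fin.ext (by simp only [Fin.val_mk]; omega))))

lemma symmetrizeZ_neg (n : ℕ) (hn : 0 < n) (x : Fin n → ℂ) (hx : (x ⟨0, hn⟩).im = 0)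
    (j : Fin (4 * n - 3)) :
    symmetrizeZ n x (-j) = (starRingEnd ℂ) (symmetrizeZ n x j) := by
  have hj := j.isLt
  have hneg : ((-j : Fin (4 * n - 3)) : ℕ) = ((4 * n - 3) - (j : ℕ)) % (4 * n - 3) :=
    Fin.coe_neg j
  rw [symmetrizeZ_apply n hn, symmetrizeZ_apply n hn]
  rcases Nat.eq_zero_or_pos (j : ℕ) with h0 | h0
  · have hv : ((-j : Fin (4 * n - 3)) : ℕ) = 0 := by
      rw [hneg, h0, Nat.sub_zero, Nat.mod_self]
    simp only [hv, h0]
    simp only [dif_pos hn]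
    exact (Complex.conj_eq_iff_im.mpr hx).symm
  · have hv : ((-j : Fin (4 * n - 3)) : ℕ) = 4 * n - 3 - (j : ℕ) := by
      rw [hneg, Nat.mod_eq_of_lt (by omega)]
    simp only [hv]
    split_ifs with h1 h2 h3 h4 <;>
      first
        | omega
        | simp
        | (exact congrArg _ (congrArg x (Fin.ext (by simp only [Fin.val_mk]; omega))))
        | (rw [Complex.conj_conj]; exact congrArg x (Fin.ext (by simp only [Fin.val_mk]; omega)))

/-- `F(𝒮_z(x) ⊛ 𝒮_z(x)) = √ñ |F 𝒮_z(x)|²` for `x` with real zeroth entry, `ñ = 4n-3`. -/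
theorem dft_autoconv_symmetrizeZ (n : ℕ) (hn : 0 < n) (x : Fin n → ℂ)
    (hx : (x ⟨0, hn⟩).im = 0) :
    (dft (4 * n - 3)).mulVec (cconv (symmetrizeZ n x) (symmetrizeZ n x)) =
      fun k => ((Real.sqrt (4 * n - 3) : ℝ) : ℂ) *
        ((‖(dft (4 * n - 3)).mulVec (symmetrizeZ n x) k‖ ^ 2 : ℝ) : ℂ) := by
  funext k
  have hm : 0 < 4 * n - 3 := by omega
  rw [dft_cconv _ hm]
  have hcast : ((4 * n - 3 : ℕ) : ℝ) = 4 * (n : ℝ) - 3 := by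
    have h3 : 3 ≤ 4 * n := by omega
    push_cast [h3]
    ring
  rw [hcast]
  have hz := dft_real _ hm (symmetrizeZ n x) (symmetrizeZ_neg n hn x hx) k
  set z := (dft (4 * n - 3)).mulVec (symmetrizeZ n x) k with hzdef
  show ((Real.sqrt (4 * (n : ℝ) - 3) : ℝ) : ℂ) * z * z
      = ((Real.sqrt (4 * (n : ℝ) - 3) : ℝ) : ℂ) * ((‖z‖ ^ 2 : ℝ) : ℂ)
  have hzz : z * z = ((‖z‖ ^ 2 : ℝ) : ℂ) := by
    nth_rewrite 2 [← hz]
    rw [Complex.mul_conj, Complex.normSq_eq_norm_sq]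
  rw [mul_assoc, hzz]
end

section
/- Let n ∈ ℕ, n ≥ 1, and set ñ = 4n−3. Let F be the ñ×ñ unitary DFT matrix and 𝒮_z : ℂ^n → ℂ^{ñ} the zero-padded symmetrization. Then there exists a constant c > 0 (depending only on ñ) such that for all x₁, x₂ ∈ ℂ^n with (x₁)_0, (x₂)_0 ∈ ℝ, it holds that ‖ |F 𝒮_z(x₁)|² − |F 𝒮_z(x₂)|² ‖ ≥ c · ‖x₁ − x₂‖ · ‖x₁ + x₂‖. -/
open scoped BigOperators

namespace StabAux

noncomputable def om (m : ℕ) : ℂ := Complex.exp (2 * Real.pi * Complex.I / m)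

lemma om_pow_m (m : ℕ) (hm : 0 < m) : om m ^ m = 1 := by
  rw [om, ← Complex.exp_nat_mul]
  rw [mul_div_assoc']
  rw [mul_div_cancel_left₀ _ (by exact_mod_cast hm.ne')]
  exact Complex.exp_two_pi_mul_I

lemma om_pow_mod (m : ℕ) (hm : 0 < m) (a : ℕ) : om m ^ a = om m ^ (a % m) := by
  conv_lhs => rw [← Nat.div_add_mod a m]
  rw [pow_add, pow_mul, om_pow_m m hm, one_pow, one_mul]

lemma om_pow_congr (m : ℕ) (hm : 0 < m) {a b : ℕ} (h : a % m = b % m) :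
    om m ^ a = om m ^ b := by rw [om_pow_mod m hm a, om_pow_mod m hm b, h]

lemma dft_apply (m : ℕ) (hm : 0 < m) (k l : Fin m) :
    dft m k l = ((Real.sqrt m : ℝ) : ℂ)⁻¹ * om m ^ ((k : ℕ) * (l : ℕ)) := by
  rw [dft, om, ← Complex.exp_nat_mul]
  congr 2
  push_cast
  field_simp

lemma dft_mulVec (m : ℕ) (hm : 0 < m) (u : Fin m → ℂ) (k : Fin m) :
    (dft m).mulVec u k
      = ((Real.sqrt m : ℝ) : ℂ)⁻¹ * ∑ l : Fin m, u l * om m ^ ((k : ℕ) * (l : ℕ)) := by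
  rw [Matrix.mulVec, dotProduct, Finset.mul_sum]
  refine Finset.sum_congr rfl fun l _ => ?_
  rw [dft_apply m hm k l]; ring

end StabAux
namespace StabAux

variable {n : ℕ}

-- entrywise description of symmetrizeZ
lemma symZ_lt (hn : 0 < n) (x : Fin n → ℂ) (k : Fin (4 * n - 3)) (h : (k : ℕ) < n) :
    symmetrizeZ n x k = x ⟨k, h⟩ := by
  rw [symmetrizeZ, symmetrize]
  rw [dif_pos (show (k : ℕ) < 2 * n - 1 by omega)]
  rw [pad, dif_pos h]

lemma symZ_mid (hn : 0 < n) (x : Fin n → ℂ) (k : Fin (4 * n - 3))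
    (h1 : n ≤ (k : ℕ)) (h2 : (k : ℕ) ≤ 3 * n - 3) : symmetrizeZ n x k = 0 := by
  rw [symmetrizeZ, symmetrize]
  by_cases h : (k : ℕ) < 2 * n - 1
  · rw [dif_pos h, pad, dif_neg (by simp only [Fin.val_mk]; omega)]
  · rw [dif_neg h, pad, dif_neg (by simp only [Fin.val_mk]; omega), map_zero]

lemma symZ_hi (hn : 0 < n) (x : Fin n → ℂ) (k : Fin (4 * n - 3))
    (h1 : 3 * n - 3 < (k : ℕ)) (h0 : 0 < (k : ℕ)) :
    symmetrizeZ n x k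
      = (starRingEnd ℂ) (x ⟨4 * n - 3 - (k : ℕ), by have := k.isLt; omega⟩) := by
  have hk := k.isLt
  rw [symmetrizeZ, symmetrize]
  by_cases hn1 : n = 1
  · omega
  · rw [dif_neg (by simp only [Fin.val_mk]; omega), pad, dif_pos (by simp only [Fin.val_mk]; omega)]
    congr 2
    apply Fin.ext
    simp only [Fin.val_mk]
    omega

end StabAux
namespace StabAux
variable {n : ℕ}

lemma neg_val (hn : 0 < n) (l : Fin (4 * n - 3)) (h0 : (l : ℕ) ≠ 0) :
    ((-l : Fin (4 * n - 3)) : ℕ) = 4 * n - 3 - (l : ℕ) := by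
  have hl := l.isLt
  rw [Fin.coe_neg]
  exact Nat.mod_eq_of_lt (by omega)

lemma symZ_neg (hn : 0 < n) (x : Fin n → ℂ) (hx : (x ⟨0, hn⟩).im = 0)
    (l : Fin (4 * n - 3)) :
    symmetrizeZ n x (-l) = (starRingEnd ℂ) (symmetrizeZ n x l) := by
  have hl := l.isLt
  by_cases h0 : (l : ℕ) = 0
  · have hneg : (-l) = l := by
      apply Fin.ext
      rw [Fin.coe_neg, h0, Nat.sub_zero, Nat.mod_self]
    rw [hneg, symZ_lt hn x l (by omega), eq_comm, Complex.conj_eq_iff_im]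
    have : (⟨(l : ℕ), by omega⟩ : Fin n) = ⟨0, hn⟩ := Fin.ext (by simp [h0])
    rw [this]
    exact hx
  · have hneg : ((-l : Fin (4 * n - 3)) : ℕ) = 4 * n - 3 - (l : ℕ) := neg_val hn l h0
    rcases lt_or_ge ((l : ℕ)) n with h1 | h1
    · rw [symZ_lt hn x l h1]
      rw [symZ_hi hn x (-l) (by omega) (by omega)]
      congr 2
      apply Fin.ext
      simp only [Fin.val_mk]
      omega
    · rcases le_or_gt ((l : ℕ)) (3 * n - 3) with h2 | h2
      · rw [symZ_mid hn x l h1 h2, symZ_mid hn x (-l) (by omega) (by omega), map_zero]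
      · rw [symZ_hi hn x l h2 (by omega)]
        rw [symZ_lt hn x (-l) (by omega)]
        rw [Complex.conj_conj]
        congr 1
        apply Fin.ext
        simp only [Fin.val_mk]
        omega

end StabAux
namespace StabAux
variable {n : ℕ}

lemma om_eq (m : ℕ) : om m = Complex.exp (((2 * Real.pi / m : ℝ) : ℂ) * Complex.I) := by
  rw [om]; congr 1; push_cast; ring

lemma abs_om (m : ℕ) : ‖om m‖ = 1 := by
  rw [om_eq]; exact Complex.norm_exp_ofReal_mul_I _

lemma om_ne_zero (m : ℕ) : om m ≠ 0 := by
  intro h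
  have := abs_om m
  rw [h] at this
  simp at this

lemma conj_om_pow (m : ℕ) (hm : 0 < m) {e f : ℕ} (h : (e + f) % m = 0) :
    (starRingEnd ℂ) (om m ^ e) = om m ^ f := by
  have hne : om m ^ e ≠ 0 := pow_ne_zero _ (om_ne_zero m)
  apply mul_right_cancel₀ hne
  rw [mul_comm ((starRingEnd ℂ) (om m ^ e)) (om m ^ e), Complex.mul_conj]
  rw [← Complex.sq_norm, norm_pow, abs_om, one_pow]
  rw [← pow_add, om_pow_congr m hm (show (f + e) % m = 0 % m by rw [Nat.add_comm f e, h, Nat.zero_mod]), pow_zero]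
  norm_num

lemma p_conj (hn : 0 < n) (x : Fin n → ℂ) (hx : (x ⟨0, hn⟩).im = 0)
    (k : Fin (4 * n - 3)) :
    (starRingEnd ℂ) ((dft (4 * n - 3)).mulVec (symmetrizeZ n x) k)
      = (dft (4 * n - 3)).mulVec (symmetrizeZ n x) k := by
  have hm : 0 < 4 * n - 3 := by omega
  rw [dft_mulVec _ hm, map_mul, map_inv₀, Complex.conj_ofReal, map_sum]
  congr 1
  rw [← Equiv.sum_comp (Equiv.neg (Fin (4 * n - 3)))
    (fun l => symmetrizeZ n x l * om (4 * n - 3) ^ ((k : ℕ) * (l : ℕ)))]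
  refine Finset.sum_congr rfl fun l _ => ?_
  simp only [Equiv.neg_apply]
  rw [map_mul, ← symZ_neg hn x hx l]
  congr 1
  apply conj_om_pow _ hm
  have hl := l.isLt
  by_cases h0 : (l : ℕ) = 0
  · have : ((-l : Fin (4 * n - 3)) : ℕ) = 0 := by
      rw [Fin.coe_neg, h0, Nat.sub_zero, Nat.mod_self]
    rw [this, h0]
    simp
  · rw [neg_val hn l h0, ← Nat.mul_add]
    have : (l : ℕ) + (4 * n - 3 - (l : ℕ)) = 4 * n - 3 := by omega
    rw [this, Nat.mul_mod_left]

end StabAux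
namespace StabAux
variable {n : ℕ}

/-- shift amount `n-1` as an element of `Fin (4n-3)`. -/
def cf (hn : 0 < n) : Fin (4 * n - 3) := ⟨n - 1, by omega⟩

/-- shifted symmetrized vector -/
noncomputable def av (hn : 0 < n) (x : Fin n → ℂ) (j : Fin (4 * n - 3)) : ℂ :=
  symmetrizeZ n x (j - cf hn)

lemma sub_cf_val (hn : 0 < n) (j : Fin (4 * n - 3)) :
    ((j - cf hn : Fin (4 * n - 3)) : ℕ)
      = ((j : ℕ) + (4 * n - 3 - (n - 1))) % (4 * n - 3) := by
  rw [Fin.sub_def]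
  simp only [Fin.val_mk, cf]
  rw [Nat.add_comm]

lemma av_eq_zero (hn : 0 < n) (x : Fin n → ℂ) (j : Fin (4 * n - 3))
    (hj : 2 * n - 1 ≤ (j : ℕ)) : av hn x j = 0 := by
  have hj2 := j.isLt
  have hv : ((j - cf hn : Fin (4 * n - 3)) : ℕ) = (j : ℕ) - (n - 1) := by
    rw [sub_cf_val hn j]
    have h1 : (j : ℕ) + (4 * n - 3 - (n - 1)) = ((j : ℕ) - (n - 1)) + (4 * n - 3) := by omega
    rw [h1, Nat.add_mod_right]
    exact Nat.mod_eq_of_lt (by omega)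
  exact symZ_mid hn x _ (by omega) (by omega)

/-- the polynomial with coefficients `av` -/
noncomputable def P (hn : 0 < n) (x : Fin n → ℂ) : Polynomial ℂ :=
  ∑ j : Fin (4 * n - 3), Polynomial.C (av hn x j) * Polynomial.X ^ (j : ℕ)

lemma natDegree_P_le (hn : 0 < n) (x : Fin n → ℂ) : (P hn x).natDegree ≤ 2 * n - 2 := by
  apply Polynomial.natDegree_sum_le_of_forall_le
  intro j _
  by_cases hj : 2 * n - 1 ≤ (j : ℕ)
  · rw [av_eq_zero hn x j hj]
    simp
  · exact (Polynomial.natDegree_C_mul_X_pow_le _ _).trans (by omega)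

lemma coeff_P (hn : 0 < n) (x : Fin n → ℂ) (j : Fin (4 * n - 3)) :
    (P hn x).coeff (j : ℕ) = av hn x j := by
  rw [P, Polynomial.finset_sum_coeff]
  rw [Finset.sum_eq_single j]
  · simp
  · intro b _ hb
    simp only [Polynomial.coeff_C_mul, Polynomial.coeff_X_pow]
    rw [if_neg (fun h => hb (Fin.ext (by omega))), mul_zero]
  · intro h
    exact absurd (Finset.mem_univ j) h

lemma eval_P (hn : 0 < n) (x : Fin n → ℂ) (k : Fin (4 * n - 3)) :
    (P hn x).eval (om (4 * n - 3) ^ (k : ℕ))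
      = om (4 * n - 3) ^ ((k : ℕ) * (n - 1)) *
        ∑ l : Fin (4 * n - 3), symmetrizeZ n x l * om (4 * n - 3) ^ ((k : ℕ) * (l : ℕ)) := by
  have hm : 0 < 4 * n - 3 := by omega
  haveI : NeZero (4 * n - 3) := ⟨by omega⟩
  rw [P, Polynomial.eval_finset_sum]
  simp only [Polynomial.eval_mul, Polynomial.eval_C, Polynomial.eval_pow, Polynomial.eval_X,
    ← pow_mul]
  rw [← Equiv.sum_comp (Equiv.addRight (cf hn))
    (fun j => av hn x j * om (4 * n - 3) ^ ((k : ℕ) * (j : ℕ)))]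
  rw [Finset.mul_sum]
  refine Finset.sum_congr rfl fun l _ => ?_
  simp only [Equiv.coe_addRight]
  rw [av, add_sub_cancel_right]
  rw [mul_comm (om (4 * n - 3) ^ ((k : ℕ) * (n - 1))) _, mul_assoc, ← pow_add]
  congr 1
  apply om_pow_congr _ hm
  have : ((l + cf hn : Fin (4 * n - 3)) : ℕ) = ((l : ℕ) + (n - 1)) % (4 * n - 3) := by
    rw [Fin.add_def]
    simp only [Fin.val_mk, cf]
  rw [this]
  exact ((Nat.mod_modEq _ _).mul_left _).trans (by rw [Nat.mul_add])

end StabAux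
namespace StabAux
variable {n : ℕ}

lemma P_zero_imp (hn : 0 < n) (x : Fin n → ℂ) (hP : P hn x = 0) : x = 0 := by
  haveI : NeZero (4 * n - 3) := ⟨by omega⟩
  funext i
  have hi : (i : ℕ) < 4 * n - 3 := by have := i.isLt; omega
  have h1 : x i = symmetrizeZ n x ⟨(i : ℕ), hi⟩ := by
    rw [symZ_lt hn x ⟨(i : ℕ), hi⟩ (by simpa using i.isLt)]
  have h2 : symmetrizeZ n x ⟨(i : ℕ), hi⟩ = av hn x (⟨(i : ℕ), hi⟩ + cf hn) := by
    rw [av, add_sub_cancel_right]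
  rw [h1, h2, ← coeff_P, hP]
  simp

lemma key (hn : 0 < n) (x y : Fin n → ℂ)
    (h : ∀ k, (dft (4 * n - 3)).mulVec (symmetrizeZ n x) k *
      (dft (4 * n - 3)).mulVec (symmetrizeZ n y) k = 0) :
    x = 0 ∨ y = 0 := by
  have hm : 0 < 4 * n - 3 := by omega
  have hprim : IsPrimitiveRoot (om (4 * n - 3)) (4 * n - 3) := by
    rw [om]
    exact Complex.isPrimitiveRoot_exp _ (by omega)
  have hsq : ((Real.sqrt ((4 * n - 3 : ℕ) : ℝ) : ℝ) : ℂ) ≠ 0 := by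
    have h1 : (0:ℝ) < Real.sqrt ((4 * n - 3 : ℕ) : ℝ) :=
      Real.sqrt_pos.mpr (by exact_mod_cast hm)
    exact_mod_cast h1.ne'
  have heval : ∀ k : Fin (4 * n - 3),
      ((P hn x) * (P hn y)).eval (om (4 * n - 3) ^ (k : ℕ)) = 0 := by
    intro k
    rw [Polynomial.eval_mul, eval_P hn x k, eval_P hn y k]
    have hSx : (∑ l : Fin (4 * n - 3),
        symmetrizeZ n x l * om (4 * n - 3) ^ ((k : ℕ) * (l : ℕ)))
        = ((Real.sqrt ((4 * n - 3 : ℕ) : ℝ) : ℝ) : ℂ) *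
          (dft (4 * n - 3)).mulVec (symmetrizeZ n x) k := by
      rw [dft_mulVec _ hm]
      field_simp
    have hSy : (∑ l : Fin (4 * n - 3),
        symmetrizeZ n y l * om (4 * n - 3) ^ ((k : ℕ) * (l : ℕ)))
        = ((Real.sqrt ((4 * n - 3 : ℕ) : ℝ) : ℝ) : ℂ) *
          (dft (4 * n - 3)).mulVec (symmetrizeZ n y) k := by
      rw [dft_mulVec _ hm]
      field_simp
    rw [hSx, hSy]
    linear_combination (om (4 * n - 3) ^ ((k : ℕ) * (n - 1)) *
      ((Real.sqrt ((4 * n - 3 : ℕ) : ℝ) : ℝ) : ℂ) *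
      (om (4 * n - 3) ^ ((k : ℕ) * (n - 1)) *
      ((Real.sqrt ((4 * n - 3 : ℕ) : ℝ) : ℝ) : ℂ))) * h k
  have hPQ : P hn x * P hn y = 0 := by
    apply Polynomial.eq_zero_of_natDegree_lt_card_of_eval_eq_zero _
      (f := fun k : Fin (4 * n - 3) => om (4 * n - 3) ^ (k : ℕ))
      (fun i j hij => Fin.ext (hprim.pow_inj i.isLt j.isLt hij)) heval
    rw [Fintype.card_fin]
    have h1 := natDegree_P_le hn x
    have h2 := natDegree_P_le hn y
    have h3 := Polynomial.natDegree_mul_le (p := P hn x) (q := P hn y)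
    omega
  rcases mul_eq_zero.mp hPQ with hP | hP
  · exact Or.inl (P_zero_imp hn x hP)
  · exact Or.inr (P_zero_imp hn y hP)

end StabAux
namespace StabAux
variable {n : ℕ}

lemma symZ_add (x y : Fin n → ℂ) :
    symmetrizeZ n (x + y) = symmetrizeZ n x + symmetrizeZ n y := by
  funext k
  simp only [symmetrizeZ, symmetrize, pad, Pi.add_apply]
  split_ifs <;> simp

lemma symZ_sub (x y : Fin n → ℂ) :
    symmetrizeZ n (x - y) = symmetrizeZ n x - symmetrizeZ n y := by
  funext k
  simp only [symmetrizeZ, symmetrize, pad, Pi.sub_apply]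
  split_ifs <;> simp

lemma symZ_smul (t : ℝ) (x : Fin n → ℂ) :
    symmetrizeZ n (t • x) = t • symmetrizeZ n x := by
  funext k
  simp only [symmetrizeZ, symmetrize, pad, Pi.smul_apply]
  split_ifs <;> simp [Complex.real_smul, map_mul, Complex.conj_ofReal]

/-- the measurement vector -/
noncomputable def pv (n : ℕ) (x : Fin n → ℂ) : Fin (4 * n - 3) → ℂ :=
  (dft (4 * n - 3)).mulVec (symmetrizeZ n x)

lemma pv_add (x y : Fin n → ℂ) : pv n (x + y) = pv n x + pv n y := by
  rw [pv, symZ_add, Matrix.mulVec_add]; rfl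

lemma pv_sub (x y : Fin n → ℂ) : pv n (x - y) = pv n x - pv n y := by
  rw [pv, symZ_sub, Matrix.mulVec_sub]; rfl

lemma pv_smul (t : ℝ) (x : Fin n → ℂ) : pv n (t • x) = t • pv n x := by
  rw [pv, symZ_smul, Matrix.mulVec_smul]; rfl

/-- the real bilinear-ish vector -/
noncomputable def Bv (n : ℕ) (x y : Fin n → ℂ) : Fin (4 * n - 3) → ℝ :=
  fun k => (pv n x k * (starRingEnd ℂ) (pv n y k)).re

lemma Bv_smul_left (t : ℝ) (x y : Fin n → ℂ) (k : Fin (4 * n - 3)) :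
    Bv n (t • x) y k = t * Bv n x y k := by
  rw [Bv, Bv, pv_smul, Pi.smul_apply, Complex.real_smul, mul_assoc, Complex.re_ofReal_mul]

lemma Bv_smul_right (t : ℝ) (x y : Fin n → ℂ) (k : Fin (4 * n - 3)) :
    Bv n x (t • y) k = t * Bv n x y k := by
  rw [Bv, Bv, pv_smul, Pi.smul_apply, Complex.real_smul, map_mul, Complex.conj_ofReal]
  rw [show pv n x k * ((t : ℂ) * (starRingEnd ℂ) (pv n y k))
      = (t : ℂ) * (pv n x k * (starRingEnd ℂ) (pv n y k)) by ring, Complex.re_ofReal_mul]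

end StabAux
namespace StabAux
variable {n : ℕ}

lemma euclNorm_nonneg {m : ℕ} {E : Type*} [SeminormedAddGroup E] (x : Fin m → E) :
    0 ≤ euclNorm x := Real.sqrt_nonneg _

lemma euclNorm_eq_zero_iff {m : ℕ} {E : Type*} [NormedAddGroup E] (x : Fin m → E) :
    euclNorm x = 0 ↔ x = 0 := by
  rw [euclNorm, Real.sqrt_eq_zero (by positivity)]
  constructor
  · intro h
    funext i
    have h2 : ∀ i ∈ Finset.univ, (0:ℝ) ≤ ‖x i‖ ^ 2 := fun i _ => by positivity
    have := (Finset.sum_eq_zero_iff_of_nonneg h2).mp h i (Finset.mem_univ i)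
    have : ‖x i‖ = 0 := by nlinarith [norm_nonneg (x i)]
    simpa using this
  · intro h; rw [h]; simp

lemma euclNorm_pos {m : ℕ} {E : Type*} [NormedAddGroup E] {x : Fin m → E} (hx : x ≠ 0) :
    0 < euclNorm x :=
  lt_of_le_of_ne (euclNorm_nonneg x) (fun h => hx ((euclNorm_eq_zero_iff x).mp h.symm))

lemma euclNorm_smul_c {m : ℕ} (t : ℝ) (x : Fin m → ℂ) :
    euclNorm (t • x) = |t| * euclNorm x := by
  rw [euclNorm, euclNorm]
  have : ∀ i, ‖(t • x) i‖ ^ 2 = t ^ 2 * ‖x i‖ ^ 2 := by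
    intro i
    rw [Pi.smul_apply, norm_smul, Real.norm_eq_abs, mul_pow, sq_abs]
  simp only [this, ← Finset.mul_sum]
  rw [Real.sqrt_mul (sq_nonneg t), Real.sqrt_sq_eq_abs]

lemma euclNorm_smul_r {m : ℕ} (t : ℝ) (v : Fin m → ℝ) :
    euclNorm (fun k => t * v k) = |t| * euclNorm v := by
  rw [euclNorm, euclNorm]
  have : ∀ i, ‖t * v i‖ ^ 2 = t ^ 2 * ‖v i‖ ^ 2 := by
    intro i
    rw [Real.norm_eq_abs, Real.norm_eq_abs, abs_mul, mul_pow, sq_abs]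
  simp only [this, ← Finset.mul_sum]
  rw [Real.sqrt_mul (sq_nonneg t), Real.sqrt_sq_eq_abs]

lemma apply_le_euclNorm {m : ℕ} {E : Type*} [SeminormedAddGroup E] (x : Fin m → E)
    (i : Fin m) : ‖x i‖ ≤ euclNorm x := by
  rw [euclNorm]
  rw [show ‖x i‖ = Real.sqrt (‖x i‖ ^ 2) by rw [Real.sqrt_sq (norm_nonneg _)]]
  apply Real.sqrt_le_sqrt
  exact Finset.single_le_sum (f := fun j => ‖x j‖ ^ 2) (fun j _ => by positivity)
    (Finset.mem_univ i)

end StabAux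
namespace StabAux
variable {n : ℕ}

lemma continuous_symZ (hn : 0 < n) : Continuous (symmetrizeZ n) := by
  apply continuous_pi
  intro k
  simp only [symmetrizeZ, symmetrize, pad]
  split_ifs with h1 h2 h3
  · exact continuous_apply _
  · exact continuous_const
  · exact Complex.continuous_conj.comp (continuous_apply _)
  · exact continuous_const

lemma continuous_pv (hn : 0 < n) : Continuous (pv n) := by
  apply continuous_pi
  intro k
  simp only [pv, Matrix.mulVec, dotProduct]
  apply continuous_finset_sum
  intro l _
  exact continuous_const.mul ((continuous_apply l).comp (continuous_symZ hn))

lemma continuous_euclNorm {m : ℕ} {E : Type*} [SeminormedAddGroup E] :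
    Continuous (euclNorm (m := m) (E := E)) := by
  apply Real.continuous_sqrt.comp
  apply continuous_finset_sum
  intro i _
  exact ((continuous_apply i).norm).pow 2

lemma norm_sq_identity (a b : ℂ) :
    ‖a‖ ^ 2 - ‖b‖ ^ 2 = ((a + b) * (starRingEnd ℂ) (a - b)).re := by
  simp only [Complex.sq_norm, Complex.normSq_apply, Complex.mul_re,
    Complex.add_re, Complex.add_im, Complex.sub_re, Complex.sub_im,
    Complex.conj_re, Complex.conj_im]
  ring

end StabAux
namespace StabAux
variable {n : ℕ}

lemma Bv_ne_zero (hn : 0 < n) {x y : Fin n → ℂ}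
    (hx : (x ⟨0, hn⟩).im = 0) (hy : (y ⟨0, hn⟩).im = 0)
    (hxne : x ≠ 0) (hyne : y ≠ 0) : Bv n x y ≠ 0 := by
  intro hB
  have hall : ∀ k, (dft (4 * n - 3)).mulVec (symmetrizeZ n x) k *
      (dft (4 * n - 3)).mulVec (symmetrizeZ n y) k = 0 := by
    intro k
    have hw : (starRingEnd ℂ) (pv n x k * (starRingEnd ℂ) (pv n y k))
        = pv n x k * (starRingEnd ℂ) (pv n y k) := by
      rw [map_mul, Complex.conj_conj]
      rw [show (starRingEnd ℂ) (pv n x k) = pv n x k from p_conj hn x hx k]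
      rw [show (starRingEnd ℂ) (pv n y k) = pv n y k from p_conj hn y hy k]
    have hre : (pv n x k * (starRingEnd ℂ) (pv n y k)).re = 0 := congrFun hB k
    have hzero : pv n x k * (starRingEnd ℂ) (pv n y k) = 0 := by
      have h2 := Complex.conj_eq_iff_re.mp hw
      rw [← h2, hre]
      simp
    show pv n x k * pv n y k = 0
    rw [show pv n y k = (starRingEnd ℂ) (pv n y k) from (p_conj hn y hy k).symm]
    exact hzero
  rcases key hn x y hall with h | h
  · exact hxne h
  · exact hyne h

end StabAux

/-- Stability of the magnitude Fourier measurements of zero-padded symmetrized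
vectors, in terms of `‖x₁ ∓ x₂‖`. -/
theorem stable_recovery_symmetrizeZ' (n : ℕ) (hn : 0 < n) :
    ∃ c : ℝ, 0 < c ∧ ∀ x₁ x₂ : Fin n → ℂ,
      (x₁ ⟨0, hn⟩).im = 0 → (x₂ ⟨0, hn⟩).im = 0 →
      c * euclNorm (x₁ - x₂) * euclNorm (x₁ + x₂) ≤
        euclNorm (fun k => ‖(dft (4 * n - 3)).mulVec (symmetrizeZ n x₁) k‖ ^ 2 -
          ‖(dft (4 * n - 3)).mulVec (symmetrizeZ n x₂) k‖ ^ 2) := by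
  classical
  open StabAux in
  let K : Set ((Fin n → ℂ) × (Fin n → ℂ)) :=
    {z | (z.1 ⟨0, hn⟩).im = 0 ∧ (z.2 ⟨0, hn⟩).im = 0 ∧
      euclNorm z.1 = 1 ∧ euclNorm z.2 = 1}
  let g : ((Fin n → ℂ) × (Fin n → ℂ)) → ℝ := fun z => euclNorm (StabAux.Bv n z.1 z.2)
  have hgcont : Continuous g := by
    apply StabAux.continuous_euclNorm.comp
    apply continuous_pi
    intro k
    apply Complex.continuous_re.comp
    apply Continuous.mul
    · exact ((continuous_apply k).comp ((StabAux.continuous_pv hn).comp continuous_fst))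
    · exact Complex.continuous_conj.comp
        ((continuous_apply k).comp ((StabAux.continuous_pv hn).comp continuous_snd))
  have hKclosed : IsClosed K := by
    have hA : IsClosed {z : (Fin n → ℂ) × (Fin n → ℂ) | (z.1 ⟨0, hn⟩).im = 0} :=
      isClosed_eq (Complex.continuous_im.comp
        ((continuous_apply (⟨0, hn⟩ : Fin n)).comp continuous_fst)) continuous_const
    have hB : IsClosed {z : (Fin n → ℂ) × (Fin n → ℂ) | (z.2 ⟨0, hn⟩).im = 0} :=
      isClosed_eq (Complex.continuous_im.comp
        ((continuous_apply (⟨0, hn⟩ : Fin n)).comp continuous_snd)) continuous_const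
    have hC : IsClosed {z : (Fin n → ℂ) × (Fin n → ℂ) | euclNorm z.1 = 1} :=
      isClosed_eq (StabAux.continuous_euclNorm.comp continuous_fst) continuous_const
    have hD : IsClosed {z : (Fin n → ℂ) × (Fin n → ℂ) | euclNorm z.2 = 1} :=
      isClosed_eq (StabAux.continuous_euclNorm.comp continuous_snd) continuous_const
    have : K = {z : (Fin n → ℂ) × (Fin n → ℂ) | (z.1 ⟨0, hn⟩).im = 0} ∩
        ({z | (z.2 ⟨0, hn⟩).im = 0} ∩ ({z | euclNorm z.1 = 1} ∩ {z | euclNorm z.2 = 1})) := by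
      ext z
      simp [K, Set.mem_inter_iff, and_assoc]
    rw [this]
    exact hA.inter (hB.inter (hC.inter hD))
  have hKbdd : Bornology.IsBounded K := by
    rw [Metric.isBounded_iff_subset_closedBall 0]
    refine ⟨1, fun z hz => ?_⟩
    obtain ⟨h1, h2, h3, h4⟩ := hz
    rw [Metric.mem_closedBall, dist_zero_right, Prod.norm_def]
    apply max_le
    · apply pi_norm_le_iff_of_nonneg (by norm_num) |>.mpr
      intro i
      calc ‖z.1 i‖ ≤ euclNorm z.1 := StabAux.apply_le_euclNorm _ _
        _ = 1 := h3
    · apply pi_norm_le_iff_of_nonneg (by norm_num) |>.mpr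
      intro i
      calc ‖z.2 i‖ ≤ euclNorm z.2 := StabAux.apply_le_euclNorm _ _
        _ = 1 := h4
  have hKcpt : IsCompact K := Metric.isCompact_of_isClosed_isBounded hKclosed hKbdd
  have hKne : K.Nonempty := by
    refine ⟨(fun i => if i = ⟨0, hn⟩ then 1 else 0, fun i => if i = ⟨0, hn⟩ then 1 else 0),
      ?_, ?_, ?_, ?_⟩ <;>
      simp only [K, Set.mem_setOf_eq]
    · simp
    · simp
    all_goals
    · show euclNorm _ = 1
      rw [euclNorm]
      have : (∑ i : Fin n, ‖(if i = (⟨0, hn⟩ : Fin n) then (1:ℂ) else 0)‖ ^ 2) = 1 := by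
        rw [Finset.sum_eq_single (⟨0, hn⟩ : Fin n)]
        · simp
        · intro b _ hb
          simp [hb]
        · intro h
          exact absurd (Finset.mem_univ _) h
      rw [this, Real.sqrt_one]
  obtain ⟨z₀, hz₀K, hz₀min⟩ := hKcpt.exists_isMinOn hKne hgcont.continuousOn
  obtain ⟨hz1, hz2, hz3, hz4⟩ := hz₀K
  have hc : 0 < g z₀ := by
    rcases (StabAux.euclNorm_nonneg (StabAux.Bv n z₀.1 z₀.2)).lt_or_eq with h | h
    · exact h
    · exfalso
      have hB0 : StabAux.Bv n z₀.1 z₀.2 = 0 := (StabAux.euclNorm_eq_zero_iff _).mp h.symm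
      have hne1 : z₀.1 ≠ 0 := by
        intro h0
        rw [h0] at hz3
        rw [(StabAux.euclNorm_eq_zero_iff (0 : Fin n → ℂ)).mpr rfl] at hz3
        norm_num at hz3
      have hne2 : z₀.2 ≠ 0 := by
        intro h0
        rw [h0] at hz4
        rw [(StabAux.euclNorm_eq_zero_iff (0 : Fin n → ℂ)).mpr rfl] at hz4
        norm_num at hz4
      exact StabAux.Bv_ne_zero hn hz1 hz2 hne1 hne2 hB0
  refine ⟨g z₀, hc, ?_⟩
  intro x₁ x₂ h1 h2
  set s := x₁ + x₂ with hs_def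
  set d := x₁ - x₂ with hd_def
  have hTk : (fun k => ‖(dft (4 * n - 3)).mulVec (symmetrizeZ n x₁) k‖ ^ 2 -
      ‖(dft (4 * n - 3)).mulVec (symmetrizeZ n x₂) k‖ ^ 2) = StabAux.Bv n s d := by
    funext k
    rw [StabAux.norm_sq_identity]
    show _ = (StabAux.pv n s k * (starRingEnd ℂ) (StabAux.pv n d k)).re
    rw [hs_def, hd_def, StabAux.pv_add, StabAux.pv_sub]
    rfl
  rw [hTk]
  have hs_im : (s ⟨0, hn⟩).im = 0 := by
    rw [hs_def]
    simp [Pi.add_apply, Complex.add_im, h1, h2]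
  have hd_im : (d ⟨0, hn⟩).im = 0 := by
    rw [hd_def]
    simp [Pi.sub_apply, Complex.sub_im, h1, h2]
  by_cases hd0 : euclNorm d = 0
  · rw [hd0, mul_zero, zero_mul]
    exact StabAux.euclNorm_nonneg _
  by_cases hs0 : euclNorm s = 0
  · rw [hs0, mul_zero]
    exact StabAux.euclNorm_nonneg _
  have hdp : 0 < euclNorm d := lt_of_le_of_ne (StabAux.euclNorm_nonneg _) (Ne.symm hd0)
  have hsp : 0 < euclNorm s := lt_of_le_of_ne (StabAux.euclNorm_nonneg _) (Ne.symm hs0)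
  set es := euclNorm s
  set ed := euclNorm d
  have hmem : ((es⁻¹ • s), (ed⁻¹ • d)) ∈ K := by
    refine ⟨?_, ?_, ?_, ?_⟩
    · show ((es⁻¹ • s) ⟨0, hn⟩).im = 0
      simp [Pi.smul_apply, Complex.smul_im, hs_im]
    · show ((ed⁻¹ • d) ⟨0, hn⟩).im = 0
      simp [Pi.smul_apply, Complex.smul_im, hd_im]
    · show euclNorm (es⁻¹ • s) = 1
      rw [StabAux.euclNorm_smul_c, abs_of_pos (inv_pos.mpr hsp), inv_mul_cancel₀ hsp.ne']
    · show euclNorm (ed⁻¹ • d) = 1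
      rw [StabAux.euclNorm_smul_c, abs_of_pos (inv_pos.mpr hdp), inv_mul_cancel₀ hdp.ne']
  have hle := hz₀min hmem
  have hg_eq : g (es⁻¹ • s, ed⁻¹ • d) = es⁻¹ * (ed⁻¹ * euclNorm (StabAux.Bv n s d)) := by
    show euclNorm (StabAux.Bv n (es⁻¹ • s) (ed⁻¹ • d)) = _
    have e1 : StabAux.Bv n (es⁻¹ • s) (ed⁻¹ • d)
        = fun k => es⁻¹ * (ed⁻¹ * StabAux.Bv n s d k) := by
      funext k
      rw [StabAux.Bv_smul_left, StabAux.Bv_smul_right]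
    rw [e1, StabAux.euclNorm_smul_r]
    congr 1
    · exact abs_of_pos (inv_pos.mpr hsp)
    · rw [StabAux.euclNorm_smul_r, abs_of_pos (inv_pos.mpr hdp)]
  have hfin : g z₀ ≤ es⁻¹ * (ed⁻¹ * euclNorm (StabAux.Bv n s d)) := by
    rw [← hg_eq]
    exact hle
  have h3 := mul_le_mul_of_nonneg_right hfin (le_of_lt (mul_pos hdp hsp))
  calc g z₀ * ed * es = g z₀ * (ed * es) := by ring
    _ ≤ es⁻¹ * (ed⁻¹ * euclNorm (StabAux.Bv n s d)) * (ed * es) := h3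
    _ = euclNorm (StabAux.Bv n s d) := by field_simp
end
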